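/- Let Y be a real Hilbert space, K ⊆ Y nonempty convex and closed, and f ∈ Y. Suppose the set M of maximizers of p ↦ ⟨f, p⟩ over K is nonempty. For α > 0 let p_α be the unique maximizer over K of D_α(p) = ⟨f, p⟩ − (α/2)‖p‖². Then as α → 0⁺, p_α converges strongly in Y to the unique element of M of minimal norm. -/
import Mathlib


open RealInnerProductSpace

variable {Y : Type*} [NormedAddCommGroup Y] [InnerProductSpace ℝ Y] [CompleteSpace Y]

/-- Convergence of the dual variables: as `α → 0⁺`, the maximizer `p_α` of
`D_α(p) = ⟨f, p⟩ − (α/2)‖p‖²` over `K` converges strongly to the minimal-norm element of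
the set `M` of maximizers of `⟨f, ·⟩` over `K`. -/
theorem dual_variables_converge (K : Set Y) (hK : K.Nonempty) (hconv : Convex ℝ K)
    (hclosed : IsClosed K) (f : Y)
    (M : Set Y) (hM : M = {p ∈ K | ∀ q ∈ K, ⟪f, q⟫ ≤ ⟪f, p⟫}) (hMne : M.Nonempty)
    (pm : Y) (hpm : pm ∈ M) (hmin : ∀ q ∈ M, ‖pm‖ ≤ ‖q‖)
    (p : ℝ → Y)
    (hp : ∀ α : ℝ, 0 < α → p α ∈ K ∧ ∀ q ∈ K,
      ⟪f, q⟫ - α / 2 * ‖q‖ ^ 2 ≤ ⟪f, p α⟫ - α / 2 * ‖p α‖ ^ 2) :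
    Filter.Tendsto p (nhdsWithin 0 (Set.Ioi 0)) (nhds pm) := by
  set F := nhdsWithin (0:ℝ) (Set.Ioi 0) with hF
  rw [hM] at hpm
  obtain ⟨hpmK, hpmMax⟩ := hpm
  -- variational inequality
  have key : ∀ α : ℝ, 0 < α → ∀ w ∈ K, ⟪f - α • p α, w - p α⟫ ≤ 0 := by
    intro α hα w hw
    set u := α⁻¹ • f with hu
    have hmin' : ∀ w' ∈ K, ‖u - p α‖ ≤ ‖u - w'‖ := by
      intro w' hw'
      have h1 := (hp α hα).2 w' hw'
      have e1 : ‖u - p α‖ ^ 2 = ‖u‖ ^ 2 - 2 * ⟪u, p α⟫ + ‖p α‖ ^ 2 := norm_sub_sq_real _ _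
      have e2 : ‖u - w'‖ ^ 2 = ‖u‖ ^ 2 - 2 * ⟪u, w'⟫ + ‖w'‖ ^ 2 := norm_sub_sq_real _ _
      have e3 : ⟪u, p α⟫ = α⁻¹ * ⟪f, p α⟫ := real_inner_smul_left _ _ _
      have e4 : ⟪u, w'⟫ = α⁻¹ * ⟪f, w'⟫ := real_inner_smul_left _ _ _
      have hsq : ‖u - p α‖ ^ 2 ≤ ‖u - w'‖ ^ 2 := by
        have hαne : α ≠ 0 := ne_of_gt hα
        have expand : ∀ x y : ℝ, (x - α / 2 * y) / α = x / α - y / 2 := by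
          intro x y
          rw [div_eq_iff hαne, sub_mul, div_mul_cancel₀ _ hαne]
          ring
        have h2 := (div_le_div_iff_of_pos_right hα).mpr h1
        rw [expand, expand] at h2
        rw [e1, e2, e3, e4, inv_mul_eq_div, inv_mul_eq_div]
        linarith
      have := Real.sqrt_le_sqrt hsq
      rwa [Real.sqrt_sq (norm_nonneg _), Real.sqrt_sq (norm_nonneg _)] at this
    have heq : ‖u - p α‖ = ⨅ w : K, ‖u - w‖ := by
      haveI : Nonempty K := ⟨⟨p α, (hp α hα).1⟩⟩
      have hbdd : BddBelow (Set.range fun w : K => ‖u - (w : Y)‖) :=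
        ⟨0, by rintro x ⟨w, rfl⟩; exact norm_nonneg _⟩
      exact le_antisymm (le_ciInf fun w => hmin' w w.2) (ciInf_le hbdd ⟨p α, (hp α hα).1⟩)
    have hVI := (norm_eq_iInf_iff_real_inner_le_zero hconv (hp α hα).1).mp heq w hw
    have hfac : f - α • p α = α • (u - p α) := by
      rw [hu, smul_sub, smul_inv_smul₀ (ne_of_gt hα)]
    rw [hfac, real_inner_smul_left]
    exact mul_nonpos_of_nonneg_of_nonpos hα.le hVI
  -- norm bound
  have hb : ∀ α : ℝ, 0 < α → ‖p α‖ ≤ ‖pm‖ := by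
    intro α hα
    have hVI := key α hα pm hpmK
    have hmax := hpmMax (p α) (hp α hα).1
    rw [inner_sub_left, real_inner_smul_left, inner_sub_right, inner_sub_right,
      real_inner_self_eq_norm_sq] at hVI
    have hcs := real_inner_le_norm (p α) pm
    have h5 : ‖p α‖ ^ 2 ≤ ⟪p α, pm⟫ := by nlinarith [hVI, hmax, hα]
    nlinarith [h5, hcs, norm_nonneg (p α), norm_nonneg pm, sq_nonneg (‖p α‖ - ‖pm‖)]
  -- monotonicity of norms
  have hmono : ∀ α β : ℝ, 0 < α → α < β → ‖p β‖ ^ 2 ≤ ‖p α‖ ^ 2 := by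
    intro α β hα hαβ
    have h1 := (hp α hα).2 (p β) (hp β (hα.trans hαβ)).1
    have h2 := (hp β (hα.trans hαβ)).2 (p α) (hp α hα).1
    nlinarith [h1, h2]
  -- Cauchy-type estimate
  have hcau : ∀ α β : ℝ, 0 < α → α ≤ β → ‖p α - p β‖ ^ 2 ≤ ‖p α‖ ^ 2 - ‖p β‖ ^ 2 := by
    intro α β hα hαβ
    rcases eq_or_lt_of_le hαβ with rfl | hlt
    · simp
    have hβ : 0 < β := hα.trans hlt
    have hA := key β hβ (p α) (hp α hα).1
    have h1 := (hp α hα).2 (p β) (hp β hβ).1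
    have hm := hmono α β hα hlt
    rw [inner_sub_left, real_inner_smul_left, inner_sub_right, inner_sub_right,
      real_inner_self_eq_norm_sq] at hA
    have e1 : ‖p α - p β‖ ^ 2 = ‖p α‖ ^ 2 - 2 * ⟪p α, p β⟫ + ‖p β‖ ^ 2 := norm_sub_sq_real _ _
    have hcomm : ⟪p β, p α⟫ = ⟪p α, p β⟫ := real_inner_comm _ _
    nlinarith [hA, h1, hm]
  -- the filter is nontrivial
  haveI : F.NeBot := nhdsGT_neBot 0
  -- Cauchy
  have hC : Cauchy (Filter.map p F) := by
    rw [Metric.cauchy_iff]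
    refine ⟨Filter.NeBot.map inferInstance p, ?_⟩
    intro ε hε
    set S : Set ℝ := (fun α => ‖p α‖ ^ 2) '' Set.Ioi 0 with hS
    have hSne : S.Nonempty := ⟨‖p 1‖ ^ 2, 1, by norm_num, rfl⟩
    have hSbdd : BddAbove S := by
      refine ⟨‖pm‖ ^ 2, ?_⟩
      rintro x ⟨a, ha, rfl⟩
      exact pow_le_pow_left₀ (norm_nonneg _) (hb a ha) 2
    set L := sSup S with hL
    obtain ⟨x, hxS, hx⟩ := exists_lt_of_lt_csSup hSne
      (show L - ε ^ 2 / 2 < L by nlinarith)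
    obtain ⟨δ, hδ, rfl⟩ := hxS
    refine ⟨p '' Set.Ioo 0 δ, Filter.image_mem_map (Ioo_mem_nhdsGT_of_mem ⟨le_refl _, hδ⟩), ?_⟩
    rintro x ⟨a, ha, rfl⟩ y ⟨b, hbb, rfl⟩
    have hgen : ∀ a b : ℝ, a ∈ Set.Ioo (0:ℝ) δ → b ∈ Set.Ioo (0:ℝ) δ → a ≤ b →
        dist (p a) (p b) < ε := by
      intro a b ha hbb hab
      have h1 : ‖p a - p b‖ ^ 2 ≤ ‖p a‖ ^ 2 - ‖p b‖ ^ 2 := hcau a b ha.1 hab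
      have h2 : ‖p b‖ ^ 2 ≥ ‖p δ‖ ^ 2 := hmono b δ hbb.1 hbb.2
      have h3 : ‖p a‖ ^ 2 ≤ L := le_csSup hSbdd ⟨a, ha.1, rfl⟩
      have h4 : ‖p a - p b‖ ^ 2 < ε ^ 2 := by nlinarith
      rw [dist_eq_norm]
      exact lt_of_pow_lt_pow_left₀ 2 hε.le h4
    rcases le_total a b with hab | hab
    · exact hgen a b ha hbb hab
    · rw [dist_comm]; exact hgen b a hbb ha hab
  obtain ⟨q, hq⟩ := CompleteSpace.complete hC
  have hTend : Filter.Tendsto p F (nhds q) := hq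
  -- limit is in K
  have hmemK : ∀ᶠ α in F, p α ∈ K :=
    Filter.eventually_of_mem self_mem_nhdsWithin fun α hα => (hp α hα).1
  have hqK : q ∈ K := hclosed.mem_of_tendsto hTend hmemK
  -- identify the limit
  have hid : Filter.Tendsto (fun α : ℝ => α) F (nhds 0) :=
    Filter.tendsto_id.mono_right nhdsWithin_le_nhds
  have hinnerTend : Filter.Tendsto (fun α => ⟪f, p α⟫) F (nhds ⟪f, q⟫) :=
    Filter.Tendsto.inner tendsto_const_nhds hTend
  have hqMax : ∀ w ∈ K, ⟪f, w⟫ ≤ ⟪f, q⟫ := by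
    intro w hw
    have h2 : Filter.Tendsto (fun α : ℝ => ⟪f, w⟫ - α / 2 * ‖w‖ ^ 2) F (nhds ⟪f, w⟫) := by
      have h2' : Filter.Tendsto (fun α : ℝ => ⟪f, w⟫ - α / 2 * ‖w‖ ^ 2) F
          (nhds (⟪f, w⟫ - 0 / 2 * ‖w‖ ^ 2)) :=
        (tendsto_const_nhds (x := ⟪f, w⟫)).sub ((hid.div_const 2).mul tendsto_const_nhds)
      simpa using h2'
    have hev : ∀ᶠ α in F, ⟪f, w⟫ - α / 2 * ‖w‖ ^ 2 ≤ ⟪f, p α⟫ := by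
      refine Filter.eventually_of_mem self_mem_nhdsWithin fun α hα => ?_
      have hα' : (0:ℝ) < α := hα
      have h1 := (hp α hα').2 w hw
      have : (0:ℝ) ≤ α / 2 * ‖p α‖ ^ 2 := by positivity
      linarith
    exact le_of_tendsto_of_tendsto h2 hinnerTend hev
  have hqM : q ∈ M := by rw [hM]; exact ⟨hqK, hqMax⟩
  have hnormle : ‖q‖ ≤ ‖pm‖ := by
    refine le_of_tendsto hTend.norm ?_
    exact Filter.eventually_of_mem self_mem_nhdsWithin fun α hα => hb α hα
  have hqe : ‖q‖ = ‖pm‖ := le_antisymm hnormle (hmin q hqM)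
  -- minimal norm element is unique: q = pm
  have hzK : (1/2 : ℝ) • pm + (1/2 : ℝ) • q ∈ K :=
    hconv hpmK hqK (by norm_num) (by norm_num) (by norm_num)
  have hzM : (1/2 : ℝ) • pm + (1/2 : ℝ) • q ∈ M := by
    rw [hM]
    refine ⟨hzK, fun w hw => ?_⟩
    rw [inner_add_right, real_inner_smul_right, real_inner_smul_right]
    have := hpmMax w hw
    have := hqMax w hw
    linarith
  have hzge : ‖pm‖ ≤ ‖(1/2 : ℝ) • pm + (1/2 : ℝ) • q‖ := hmin _ hzM
  have hz : ‖(1/2 : ℝ) • pm + (1/2 : ℝ) • q‖ = (1/2) * ‖pm + q‖ := by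
    rw [← smul_add, norm_smul]
    norm_num
  have hpar : ‖pm - q‖ ^ 2 = 2 * ‖pm‖ ^ 2 + 2 * ‖q‖ ^ 2 - ‖pm + q‖ ^ 2 := by
    have e1 : ‖pm - q‖ ^ 2 = ‖pm‖ ^ 2 - 2 * ⟪pm, q⟫ + ‖q‖ ^ 2 := norm_sub_sq_real _ _
    have e2 : ‖pm + q‖ ^ 2 = ‖pm‖ ^ 2 + 2 * ⟪pm, q⟫ + ‖q‖ ^ 2 := norm_add_sq_real _ _
    linarith
  have hzero : pm = q := by
    have h1 : ‖pm - q‖ ^ 2 ≤ 0 := by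
      rw [hz] at hzge
      nlinarith [hqe, norm_nonneg (pm + q), norm_nonneg pm]
    have h2 : ‖pm - q‖ = 0 := by nlinarith [norm_nonneg (pm - q)]
    have := norm_eq_zero.mp h2
    exact sub_eq_zero.mp this
  rwa [hzero]
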